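/- Every cube with all eight vertices in ℤ³ has side length equal to a positive integer. -/
import Mathlib


open Matrix

/-- Casting a vector of integers to a point of `ℝ³` (with the Euclidean structure). -/
noncomputable def intVec (v : Fin 3 → ℤ) : EuclideanSpace ℝ (Fin 3) :=
  (WithLp.equiv 2 (Fin 3 → ℝ)).symm fun i => (v i : ℝ)

/-- Every cube with all eight vertices in `ℤ³` (given by a vertex `v ∈ ℤ³` and three
pairwise orthogonal nonzero integer edge vectors of equal norm) has side length a
positive integer. -/
theorem cube_side_length_integer (v u₁ u₂ u₃ : Fin 3 → ℤ)
    (h12 : u₁ ⬝ᵥ u₂ = 0) (h13 : u₁ ⬝ᵥ u₃ = 0) (h23 : u₂ ⬝ᵥ u₃ = 0)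
    (hn1 : u₁ ⬝ᵥ u₁ = u₂ ⬝ᵥ u₂) (hn2 : u₂ ⬝ᵥ u₂ = u₃ ⬝ᵥ u₃)
    (h0 : u₁ ≠ 0) :
    ∃ n : ℕ, 0 < n ∧ ‖intVec u₁‖ = n := by
  set N : ℤ := u₁ ⬝ᵥ u₁ with hN
  have hNpos : 0 < N := by
    have hnn : 0 ≤ N := Finset.sum_nonneg fun i _ => mul_self_nonneg _
    rcases hnn.lt_or_eq with h | h
    · exact h
    · exact absurd (dotProduct_self_eq_zero.1 h.symm) h0
  set M : Matrix (Fin 3) (Fin 3) ℤ := Matrix.of ![u₁, u₂, u₃] with hM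
  have hMM : M * Mᵀ = N • (1 : Matrix (Fin 3) (Fin 3) ℤ) := by
    ext i j
    fin_cases i <;> fin_cases j <;>
      simp only [hM, Matrix.mul_apply, Matrix.smul_apply, Matrix.one_apply, dotProduct,
        Fin.sum_univ_three, Matrix.transpose_apply, Matrix.of_apply, Matrix.cons_val',
        Matrix.cons_val_zero, Matrix.cons_val_one, Matrix.head_cons, Matrix.cons_val_fin_one,
        Matrix.empty_val', Matrix.head_fin_const, Matrix.vecHead, Matrix.vecTail,
        Function.comp, Fin.isValue, smul_eq_mul, mul_one, mul_zero, Matrix.cons_val_two,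
        Matrix.tail_cons] <;>
      simp [dotProduct, Fin.sum_univ_three, hN] at h12 h13 h23 hn1 hn2 ⊢ <;>
      linarith
  have hdet : M.det ^ 2 = N ^ 3 := by
    have := congrArg Matrix.det hMM
    rw [Matrix.det_mul, Matrix.det_transpose, Matrix.det_smul, Matrix.det_one] at this
    simpa [sq, pow_succ] using this
  have hNne : N ≠ 0 := hNpos.ne'
  have hdvd : N ∣ M.det := by
    have h2 : N ^ 2 ∣ M.det ^ 2 := ⟨N, by rw [hdet]; ring⟩
    exact (Int.pow_dvd_pow_iff (two_ne_zero)).1 h2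
  obtain ⟨k, hk⟩ := hdvd
  have hksq : k ^ 2 = N := by
    have : N ^ 2 * k ^ 2 = N ^ 2 * N := by rw [← mul_pow, ← hk, hdet]; ring
    exact mul_left_cancel₀ (pow_ne_zero 2 hNne) this
  refine ⟨k.natAbs, ?_, ?_⟩
  · rcases Nat.eq_zero_or_pos k.natAbs with h | h
    · exfalso; rw [Int.natAbs_eq_zero] at h; simp [h] at hksq; omega
    · exact h
  · have hnorm : ‖intVec u₁‖ = Real.sqrt ((N : ℝ)) := by
      rw [intVec, EuclideanSpace.norm_eq]
      congr 1
      simp [hN, dotProduct, Fin.sum_univ_three, sq, Real.norm_eq_abs, abs_mul_abs_self]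
    rw [hnorm]
    have : (N : ℝ) = ((k.natAbs : ℝ)) ^ 2 := by
      rw [← hksq]
      push_cast [Nat.cast_natAbs]
      rw [sq_abs]
    rw [this, Real.sqrt_sq (by positivity)]
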